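/- Let $p$ be a prime, $n>0$ and $0\le d\le n$ integers, and let $y_1,\dots,y_s\in\mathbb{F}_p^n$ be linearly independent. Then for a uniformly random $d$-dimensional subspace $V\subseteq\mathbb{F}_p^n$, we have $\mathbb{P}[y_1,\dots,y_s\in V]\le (p^d/p^n)^s$. -/

import Mathlib

open Module

lemma aux_card_sigma {ι : Type*} [Fintype ι] (α : ι → Type*) [∀ i, Finite (α i)] :
    Nat.card (Σ i, α i) = ∑ i, Nat.card (α i) := by
  classical
  haveI := fun i => Fintype.ofFinite (α i)
  simp [Nat.card_eq_fintype_card]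

lemma aux_card_li (F : Type*) [Field F] [Fintype F] (W : Type*) [AddCommGroup W] [Module F W]
    [Finite W] (s : ℕ) :
    Nat.card {z : Fin s → W // LinearIndependent F z} =
      ∏ i ∈ Finset.range s,
        (Fintype.card F ^ (Module.finrank F W) - Fintype.card F ^ i) := by
  classical
  haveI : Fintype W := Fintype.ofFinite W
  induction s with
  | zero =>
    rw [Nat.card_congr (Equiv.subtypeUnivEquiv fun z => linearIndependent_empty_type)]
    simp [Nat.card_eq_fintype_card]
  | succ s ih =>
    rw [Nat.card_congr (equiv_linearIndependent s), aux_card_sigma]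
    have hfib : ∀ t : {z : Fin s → W // LinearIndependent F z},
        Nat.card ((Submodule.span F (Set.range (t : Fin s → W)) : Set W)ᶜ : Set W) =
          Fintype.card F ^ (Module.finrank F W) - Fintype.card F ^ s := by
      intro t
      rw [Nat.card_eq_fintype_card, Fintype.card_compl_set]
      congr 1
      · exact card_eq_pow_finrank (K := F)
      · calc Fintype.card ((Submodule.span F (Set.range (t : Fin s → W)) : Set W))
            = Nat.card ((Submodule.span F (Set.range (t : Fin s → W)) : Set W)) :=
              Nat.card_eq_fintype_card.symm
          _ = Nat.card (Submodule.span F (Set.range (t : Fin s → W))) :=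
              Nat.card_congr (Equiv.refl _)
          _ = Fintype.card (Submodule.span F (Set.range (t : Fin s → W))) :=
              Nat.card_eq_fintype_card
          _ = Fintype.card F ^ finrank F (Submodule.span F (Set.range (t : Fin s → W))) :=
              card_eq_pow_finrank (K := F)
          _ = Fintype.card F ^ s := by rw [finrank_span_eq_card t.2, Fintype.card_fin]
    rw [Finset.sum_congr rfl (fun t _ => hfib t), Finset.sum_const, smul_eq_mul,
      Finset.card_univ, Finset.prod_range_succ, ← Nat.card_eq_fintype_card, ih]


lemma aux_exists_equiv {F V : Type*} [Field F] [AddCommGroup V] [Module F V]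
    [FiniteDimensional F V] {s : ℕ} {y z : Fin s → V}
    (hy : LinearIndependent F y) (hz : LinearIndependent F z) :
    ∃ e : V ≃ₗ[F] V, ∀ i, e (y i) = z i := by
  set Wy := Submodule.span F (Set.range y) with hWy
  set Wz := Submodule.span F (Set.range z) with hWz
  obtain ⟨Cy, hCy⟩ := Submodule.exists_isCompl Wy
  obtain ⟨Cz, hCz⟩ := Submodule.exists_isCompl Wz
  let by0 : Basis (Fin s) F Wy := Basis.span hy
  let bz0 : Basis (Fin s) F Wz := Basis.span hz
  have hdy : finrank F Wy = s := by rw [finrank_span_eq_card hy, Fintype.card_fin]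
  have hdz : finrank F Wz = s := by rw [finrank_span_eq_card hz, Fintype.card_fin]
  have hC : finrank F Cy = finrank F Cz := by
    have h1 := Submodule.finrank_add_eq_of_isCompl hCy
    have h2 := Submodule.finrank_add_eq_of_isCompl hCz
    omega
  let eW : Wy ≃ₗ[F] Wz := by0.equiv bz0 (Equiv.refl _)
  let eC : Cy ≃ₗ[F] Cz := LinearEquiv.ofFinrankEq _ _ hC
  refine ⟨(Submodule.prodEquivOfIsCompl Wy Cy hCy).symm ≪≫ₗ (eW.prodCongr eC) ≪≫ₗ
    Submodule.prodEquivOfIsCompl Wz Cz hCz, fun i => ?_⟩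
  have hyi : y i = ((by0 i : Wy) : V) := (congrArg Subtype.val (Basis.span_apply hy i)).symm
  simp only [LinearEquiv.trans_apply, hyi, Submodule.prodEquivOfIsCompl_symm_apply_left,
    LinearEquiv.prodCongr_apply, Submodule.coe_prodEquivOfIsCompl', map_zero]
  have : eW (by0 i) = bz0 i := by simp [eW, Basis.equiv_apply]
  rw [this]
  rw [ZeroMemClass.coe_zero, add_zero]
  exact congrArg Subtype.val (Basis.span_apply hz i)

lemma aux_inv {F V : Type*} [Field F] [AddCommGroup V] [Module F V]
    [FiniteDimensional F V] {s : ℕ} {y z : Fin s → V}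
    (hy : LinearIndependent F y) (hz : LinearIndependent F z) (d : ℕ) :
    Nat.card {W : Submodule F V // finrank F W = d ∧ ∀ i, y i ∈ W} =
      Nat.card {W : Submodule F V // finrank F W = d ∧ ∀ i, z i ∈ W} := by
  obtain ⟨e, he⟩ := aux_exists_equiv hy hz
  refine Nat.card_congr (Equiv.subtypeEquiv (Submodule.orderIsoMapComap e).toEquiv fun W => ?_)
  have h1 : finrank F (Submodule.map (e : V →ₗ[F] V) W) = finrank F W :=
    LinearEquiv.finrank_map_eq e W
  have h2 : ∀ i, (z i ∈ Submodule.map (e : V →ₗ[F] V) W ↔ y i ∈ W) := by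
    intro i
    rw [Submodule.mem_map_equiv]
    rw [← he i, LinearEquiv.symm_apply_apply]
  constructor
  · rintro ⟨hW, hmem⟩
    exact ⟨h1.trans hW, fun i => (h2 i).mpr (hmem i)⟩
  · rintro ⟨hW, hmem⟩
    exact ⟨h1.symm.trans hW, fun i => (h2 i).mp (hmem i)⟩

lemma aux_double_count {F V : Type*} [Field F] [Fintype F] [AddCommGroup V] [Module F V]
    [Finite V] (d s : ℕ) (y : Fin s → V) (hy : LinearIndependent F y) :
    Nat.card {W : Submodule F V // finrank F W = d ∧ ∀ i, y i ∈ W} *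
        Nat.card {z : Fin s → V // LinearIndependent F z} =
      Nat.card {W : Submodule F V // finrank F W = d} *
        ∏ i ∈ Finset.range s, (Fintype.card F ^ d - Fintype.card F ^ i) := by
  classical
  haveI : FiniteDimensional F V := (Module.finite_iff_finite (R := F)).mpr ‹_›
  haveI : Fintype V := Fintype.ofFinite V
  haveI : Finite (Submodule F V) :=
    Finite.of_injective (fun W : Submodule F V => (W : Set V)) SetLike.coe_injective
  haveI : Fintype {W : Submodule F V // finrank F W = d} := Fintype.ofFinite _
  haveI : Fintype {z : Fin s → V // LinearIndependent F z} := Fintype.ofFinite _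
  have E : (Σ W : {W : Submodule F V // finrank F W = d},
        {z : Fin s → W.1 // LinearIndependent F z}) ≃
      (Σ z : {z : Fin s → V // LinearIndependent F z},
        {W : Submodule F V // finrank F W = d ∧ ∀ i, z.1 i ∈ W}) :=
    { toFun := fun x => ⟨⟨fun i => (x.2.1 i : V),
        x.2.2.map' x.1.1.subtype (Submodule.ker_subtype _)⟩,
        ⟨x.1.1, x.1.2, fun i => (x.2.1 i).2⟩⟩
      invFun := fun x => ⟨⟨x.2.1, x.2.2.1⟩, ⟨fun i => ⟨x.1.1 i, x.2.2.2 i⟩,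
        LinearIndependent.of_comp x.2.1.subtype x.1.2⟩⟩
      left_inv := fun x => rfl
      right_inv := fun x => rfl }
  have h1 : Nat.card (Σ W : {W : Submodule F V // finrank F W = d},
        {z : Fin s → W.1 // LinearIndependent F z}) =
      Nat.card {W : Submodule F V // finrank F W = d} *
        ∏ i ∈ Finset.range s, (Fintype.card F ^ d - Fintype.card F ^ i) := by
    rw [aux_card_sigma]
    rw [Finset.sum_congr rfl (fun W _ => ?_), Finset.sum_const, smul_eq_mul, Finset.card_univ,
      Nat.card_eq_fintype_card]
    rw [aux_card_li F W.1 s, W.2]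
  have h2 : Nat.card (Σ z : {z : Fin s → V // LinearIndependent F z},
        {W : Submodule F V // finrank F W = d ∧ ∀ i, z.1 i ∈ W}) =
      Nat.card {z : Fin s → V // LinearIndependent F z} *
        Nat.card {W : Submodule F V // finrank F W = d ∧ ∀ i, y i ∈ W} := by
    rw [aux_card_sigma]
    rw [Finset.sum_congr rfl (fun z _ => aux_inv z.2 hy d), Finset.sum_const, smul_eq_mul,
      Finset.card_univ, Nat.card_eq_fintype_card, Nat.card_eq_fintype_card]
  rw [mul_comm, ← h2, ← Nat.card_congr E, h1]



/-- For linearly independent `y₁,…,y_s ∈ 𝔽_p^n`, the probability that a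
uniformly random `d`-dimensional subspace `V ⊆ 𝔽_p^n` contains all `y_i` is at most
`(p^d/p^n)^s`. Probability is expressed as the ratio of counts of subspaces. -/
theorem stmt_1 (p : ℕ) (hp : p.Prime) (n d s : ℕ) (hn : 0 < n) (hd : d ≤ n)
    (y : Fin s → (Fin n → ZMod p)) (hy : LinearIndependent (ZMod p) y) :
    (Nat.card {V : Submodule (ZMod p) (Fin n → ZMod p) //
        Module.finrank (ZMod p) V = d ∧ ∀ i, y i ∈ V} : ℝ) /
      (Nat.card {V : Submodule (ZMod p) (Fin n → ZMod p) //
        Module.finrank (ZMod p) V = d} : ℝ)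
    ≤ ((p : ℝ) ^ d / (p : ℝ) ^ n) ^ s := by
  haveI : Fact p.Prime := ⟨hp⟩
  have hcard : Fintype.card (ZMod p) = p := ZMod.card p
  have hrank : finrank (ZMod p) (Fin n → ZMod p) = n := by
    simp [Module.finrank_fin_fun]
  have hs : s ≤ n := by
    have := hy.fintype_card_le_finrank
    simpa [hrank] using this
  set A := Nat.card {V : Submodule (ZMod p) (Fin n → ZMod p) //
      finrank (ZMod p) V = d ∧ ∀ i, y i ∈ V} with hA
  set B := Nat.card {V : Submodule (ZMod p) (Fin n → ZMod p) //
      finrank (ZMod p) V = d} with hB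
  have hIn : Nat.card {z : Fin s → (Fin n → ZMod p) // LinearIndependent (ZMod p) z} =
      ∏ i ∈ Finset.range s, (p ^ n - p ^ i) := by
    rw [aux_card_li (ZMod p) _ s, hcard, hrank]
  have key : A * ∏ i ∈ Finset.range s, (p ^ n - p ^ i) =
      B * ∏ i ∈ Finset.range s, (p ^ d - p ^ i) := by
    have h := aux_double_count (F := ZMod p) d s y hy
    rw [hcard, hIn] at h
    exact h
  have hInpos : 0 < ∏ i ∈ Finset.range s, (p ^ n - p ^ i) :=
    Finset.prod_pos fun i hi => Nat.sub_pos_of_lt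
      (Nat.pow_lt_pow_right hp.one_lt (lt_of_lt_of_le (Finset.mem_range.mp hi) hs))
  have hterm : ∀ i ∈ Finset.range s, (p ^ d - p ^ i) * p ^ n ≤ p ^ d * (p ^ n - p ^ i) := by
    intro i _
    have h1 : p ^ i * p ^ d ≤ p ^ i * p ^ n :=
      Nat.mul_le_mul_left _ (Nat.pow_le_pow_right hp.pos hd)
    rw [Nat.sub_mul, mul_comm (p ^ d) (p ^ n - p ^ i), Nat.sub_mul,
      mul_comm (p ^ d) (p ^ n), mul_comm (p ^ n) (p ^ d)]
    exact Nat.sub_le_sub_left h1 _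
  have hprod : (∏ i ∈ Finset.range s, (p ^ d - p ^ i)) * (p ^ n) ^ s ≤
      (p ^ d) ^ s * ∏ i ∈ Finset.range s, (p ^ n - p ^ i) := by
    have h := Finset.prod_le_prod' (s := Finset.range s) hterm
    simpa [Finset.prod_mul_distrib, Finset.prod_const, Finset.card_range] using h
  have key2 : A * (p ^ n) ^ s ≤ B * (p ^ d) ^ s := by
    apply Nat.le_of_mul_le_mul_right _ hInpos
    calc A * (p ^ n) ^ s * ∏ i ∈ Finset.range s, (p ^ n - p ^ i)
        = (A * ∏ i ∈ Finset.range s, (p ^ n - p ^ i)) * (p ^ n) ^ s := by ring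
      _ = (B * ∏ i ∈ Finset.range s, (p ^ d - p ^ i)) * (p ^ n) ^ s := by rw [key]
      _ = B * ((∏ i ∈ Finset.range s, (p ^ d - p ^ i)) * (p ^ n) ^ s) := by ring
      _ ≤ B * ((p ^ d) ^ s * ∏ i ∈ Finset.range s, (p ^ n - p ^ i)) :=
          Nat.mul_le_mul_left _ hprod
      _ = B * (p ^ d) ^ s * ∏ i ∈ Finset.range s, (p ^ n - p ^ i) := by ring
  have hp0 : (0 : ℝ) < p := by exact_mod_cast hp.pos
  rcases Nat.eq_zero_or_pos B with hB0 | hB0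
  · rw [hB0]
    rw [Nat.cast_zero, div_zero]
    positivity
  · rw [div_pow, div_le_div_iff₀ (by exact_mod_cast hB0) (by positivity)]
    rw [mul_comm (((p : ℝ) ^ d) ^ s) (B : ℝ), mul_comm ((A : ℝ)) (((p : ℝ) ^ n) ^ s)]
    rw [mul_comm (((p : ℝ) ^ n) ^ s) (A : ℝ)]
    exact_mod_cast key2
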